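/- Let H be an outer measure on ℝ^d which is strongly subadditive and continuous from below. Then the Choquet integral with respect to H satisfies: (1) for every c ≥ 0 and nonnegative f, ∫ c f dH = c ∫ f dH; (2) (monotone convergence) if 0 ≤ f_n is a pointwise nondecreasing sequence converging pointwise to f, then lim_{n→∞} ∫ f_n dH = ∫ f dH; and (3) (countable sublinearity) for any sequence of nonnegative functions f_n, ∫ Σ_{n=1}^∞ f_n dH ≤ Σ_{n=1}^∞ ∫ f_n dH. -/

import Mathlib

open Set MeasureTheory ENNReal NNReal Filter

noncomputable section

/-- `ℝ^d` with the Euclidean metric. -/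
abbrev Euc (d : ℕ) : Type := EuclideanSpace ℝ (Fin d)

/-- An axis-parallel cube in `ℝ^d`, given by its lower corner and (positive) side length. -/
structure Cube (d : ℕ) where
  corner : Fin d → ℝ
  side : ℝ
  side_pos : 0 < side

namespace Cube

/-- The (half-open) set of points of the cube. -/
def set {d : ℕ} (Q : Cube d) : Set (Euc d) :=
  {x : Euc d | ∀ i, Q.corner i ≤ x i ∧ x i < Q.corner i + Q.side}

/-- The dyadic lattice `𝓓(Q)` generated by `Q`: all cubes of side `l(Q)·2ⁿ` (`n : ℤ`) with
corners on the correspondingly rescaled grid anchored at the corner of `Q`; equivalently `Q`,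
its dyadic ancestors, and all of their repeated dyadic subdivisions. -/
def dyadic {d : ℕ} (Q : Cube d) : Set (Cube d) :=
  {Q' | ∃ (n : ℤ) (k : Fin d → ℤ), Q'.side = Q.side * 2 ^ n ∧
    ∀ i, Q'.corner i = Q.corner i + (k i : ℝ) * (Q.side * 2 ^ n)}

end Cube

/-- The spherical Hausdorff content `𝓗^β_∞`, with `ω_β = π^{β/2}/Γ(β/2+1)`. -/
def hausdorffContent (d : ℕ) (β : ℝ) (E : Set (Euc d)) : ℝ≥0∞ :=
  ⨅ (c : ℕ → Euc d × ℝ) (_ : E ⊆ ⋃ i, Metric.ball (c i).1 (c i).2),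
    ∑' i, ENNReal.ofReal (Real.pi ^ (β / 2) / Real.Gamma (β / 2 + 1) * (c i).2 ^ β)

/-- The dyadic Hausdorff content `𝓗^{β,Q}_∞` adapted to the cube `Q`. -/
def dyadicContent (d : ℕ) (β : ℝ) (Q : Cube d) (E : Set (Euc d)) : ℝ≥0∞ :=
  ⨅ (c : ℕ → Cube d) (_ : ∀ i, c i ∈ Q.dyadic) (_ : E ⊆ ⋃ i, (c i).set),
    ∑' i, ENNReal.ofReal ((c i).side ^ β)

/-- The Choquet integral `∫_A f dH := ∫_0^∞ H({x ∈ A : f x > t}) dt`. -/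
def choquetIntegral {X : Type*} (H : Set X → ℝ≥0∞) (A : Set X) (f : X → ℝ) : ℝ≥0∞ :=
  ∫⁻ t in Set.Ioi (0 : ℝ), H {x | x ∈ A ∧ t < f x}

/-- `f` is `H`-quasicontinuous: for every `ε > 0` there is an open set `O` with `H O < ε`
such that `f` restricted to `Oᶜ` is continuous. -/
def QuasiContinuous {X : Type*} [TopologicalSpace X] (H : Set X → ℝ≥0∞) (f : X → ℝ) : Prop :=
  ∀ ε : ℝ, 0 < ε → ∃ O : Set X, IsOpen O ∧ H O < ENNReal.ofReal ε ∧ ContinuousOn f Oᶜ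

/-- `f ∈ L¹(A; H)`: `f` is `H`-quasicontinuous and `∫_A |f| dH < ∞`. -/
def MemChoquetL1 {X : Type*} [TopologicalSpace X] (H : Set X → ℝ≥0∞) (A : Set X)
    (f : X → ℝ) : Prop :=
  QuasiContinuous H f ∧ choquetIntegral H A (fun x => |f x|) < ⊤

/-- The `BMO^β(Q₀)` seminorm: `sup_{Q ⊆ Q₀} inf_{c ∈ ℝ} l(Q)^{-β} ∫_Q |u - c| d𝓗^β_∞`. -/
def bmoSeminorm (d : ℕ) (β : ℝ) (Q₀ : Set (Euc d)) (u : Euc d → ℝ) : ℝ≥0∞ :=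
  ⨆ (Q : Cube d) (_ : Q.set ⊆ Q₀),
    ⨅ c : ℝ, choquetIntegral (hausdorffContent d β) Q.set (fun x => |u x - c|) /
      ENNReal.ofReal (Q.side ^ β)

/-- Membership in `BMO^β(Q₀)`. -/
def MemBMO (d : ℕ) (β : ℝ) (Q₀ : Set (Euc d)) (u : Euc d → ℝ) : Prop :=
  MemChoquetL1 (hausdorffContent d β) Q₀ u ∧ bmoSeminorm d β Q₀ u < ⊤


/-- The classical John–Nirenberg BMO seminorm on `Q₀` with respect to Lebesgue measure. -/
def bmoClassical (d : ℕ) (Q₀ : Set (Euc d)) (u : Euc d → ℝ) : ℝ≥0∞ :=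
  ⨆ (Q : Cube d) (_ : Q.set ⊆ Q₀),
    (volume Q.set)⁻¹ * ∫⁻ x in Q.set, ENNReal.ofReal |u x - ⨍ y in Q.set, u y|

/-- The axis-parallel affine subspace of `ℝ^d` obtained by freeing the coordinates in `S`
and fixing the remaining coordinates to the values of `b`. -/
def hyperplane (d : ℕ) (S : Finset (Fin d)) (b : Fin d → ℝ) : Set (Euc d) :=
  {x : Euc d | ∀ i ∉ S, x i = b i}

/-- The classical BMO seminorm of `u` on `Q₀ ∩ H` with respect to the `k`-dimensional
Hausdorff measure `𝓗^k`, the supremum being over the subcubes `Q.set ∩ H ⊆ Q₀ ∩ H`. -/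
def bmoClassicalOnPlane (d k : ℕ) (Q₀ : Cube d) (H : Set (Euc d)) (u : Euc d → ℝ) : ℝ≥0∞ :=
  ⨆ (Q : Cube d) (_ : Q.set ∩ H ⊆ Q₀.set),
    (Measure.hausdorffMeasure (k : ℝ) (Q.set ∩ H))⁻¹ *
      ∫⁻ x in Q.set ∩ H,
        ENNReal.ofReal |u x - ⨍ y in Q.set ∩ H, u y ∂(Measure.hausdorffMeasure (k : ℝ))|
          ∂(Measure.hausdorffMeasure (k : ℝ))

/-- The unique dyadic cube of `𝓓(Q)` of generation `n` (side `l(Q)·2^{-n}`) containing `x`. -/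
def dyadicCubeAt {d : ℕ} (Q : Cube d) (n : ℕ) (x : Euc d) : Cube d where
  corner := fun i => Q.corner i + Q.side * (2 : ℝ)⁻¹ ^ n *
    (⌊(x i - Q.corner i) / (Q.side * (2 : ℝ)⁻¹ ^ n)⌋ : ℝ)
  side := Q.side * (2 : ℝ)⁻¹ ^ n
  side_pos := by have := Q.side_pos; positivity

/-- The dyadic `β`-Hausdorff maximal function associated to `𝓗^{β,Q}_∞`. -/
def dyadicMaximal (d : ℕ) (β : ℝ) (Q : Cube d) (f : Euc d → ℝ) (x : Euc d) : ℝ≥0∞ :=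
  ⨆ (Q' : Cube d) (_ : Q' ∈ Q.dyadic) (_ : x ∈ Q'.set),
    choquetIntegral (dyadicContent d β Q) Q'.set (fun y => |f y|) / ENNReal.ofReal (Q'.side ^ β)

/-- The `BMO^{β,p}(Q₀)` seminorm. -/
def bmoSeminormP (d : ℕ) (β p : ℝ) (Q₀ : Set (Euc d)) (u : Euc d → ℝ) : ℝ≥0∞ :=
  ⨆ (Q : Cube d) (_ : Q.set ⊆ Q₀),
    ⨅ c : ℝ, (choquetIntegral (hausdorffContent d β) Q.set (fun x => |u x - c| ^ p) /
      ENNReal.ofReal (Q.side ^ β)) ^ (1 / p)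

/-- The standard normalization constant `γ(α) = π^{d/2} 2^α Γ(α/2) / Γ((d-α)/2)`. -/
def rieszConst (d : ℕ) (α : ℝ) : ℝ :=
  Real.pi ^ ((d : ℝ) / 2) * 2 ^ α * Real.Gamma (α / 2) / Real.Gamma (((d : ℝ) - α) / 2)

/-- The Riesz potential `I_α μ (x) = γ(α)⁻¹ ∫ |x - y|^{α - d} dμ(y)`. -/
def rieszPotential (d : ℕ) (α : ℝ) (μ : Measure (Euc d)) (x : Euc d) : ℝ :=
  (rieszConst d α)⁻¹ * (∫⁻ y, ENNReal.ofReal (‖x - y‖ ^ (α - (d : ℝ))) ∂μ).toReal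

/-- The Morrey norm `‖μ‖_{ℳ^γ} = sup_{x, r>0} μ(B(x,r))/r^γ`. -/
def morreyNorm (d : ℕ) (γ : ℝ) (μ : Measure (Euc d)) : ℝ≥0∞ :=
  ⨆ (x : Euc d) (r : ℝ) (_ : 0 < r), μ (Metric.ball x r) / ENNReal.ofReal (r ^ γ)

/-- The dyadic `BMO^β_*(Q₀)` seminorm, where for each subcube `Q` the dyadic Hausdorff
content adapted to that `Q` is used. -/
def bmoDyadicSeminorm (d : ℕ) (β : ℝ) (Q₀ : Set (Euc d)) (u : Euc d → ℝ) : ℝ≥0∞ :=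
  ⨆ (Q : Cube d) (_ : Q.set ⊆ Q₀),
    ⨅ c : ℝ, choquetIntegral (dyadicContent d β Q) Q.set (fun x => |u x - c|) /
      ENNReal.ofReal (Q.side ^ β)

/-- A (possibly infinite) cube in `ℝ^d`: either a finite cube, or a product of intervals
which are infinite in every coordinate direction. -/
def IsGenCube (d : ℕ) (S : Set (Euc d)) : Prop :=
  (∃ Q : Cube d, S = Q.set) ∨
  (∃ I : Fin d → Set ℝ,
      (∀ i, (∃ a, I i = Set.Ici a) ∨ (∃ b, I i = Set.Iio b) ∨ I i = Set.univ) ∧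
      S = {x : Euc d | ∀ i, x i ∈ I i})

/-- The Choquet integral of an `ℝ≥0∞`-valued function. -/
def choquetIntegralE {X : Type*} (H : Set X → ℝ≥0∞) (f : X → ℝ≥0∞) : ℝ≥0∞ :=
  ∫⁻ t in Set.Ioi (0 : ℝ), H {x | ENNReal.ofReal t < f x}


section ChoquetAux

open MeasureTheory

variable {X : Type*} {H : Set X → ℝ≥0∞}

lemma choquetE_zero (h0 : H ∅ = 0) : choquetIntegralE H (fun _ => 0) = 0 := by
  rw [choquetIntegralE]
  have h : ∀ t : ℝ, {x : X | ENNReal.ofReal t < (0:ℝ≥0∞)} = ∅ := by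
    intro t; ext x; simp
  simp only [h, h0, lintegral_const, zero_mul]

lemma choquetE_smul (h0 : H ∅ = 0) (c : ℝ) (hc : 0 ≤ c) (f : X → ℝ≥0∞) :
    choquetIntegralE H (fun x => ENNReal.ofReal c * f x) =
      ENNReal.ofReal c * choquetIntegralE H f := by
  rcases eq_or_lt_of_le hc with rfl | hc
  · simp only [ENNReal.ofReal_zero, zero_mul]
    exact choquetE_zero h0
  · have hc0 : ENNReal.ofReal c ≠ 0 := (ENNReal.ofReal_pos.2 hc).ne'
    have hct : ENNReal.ofReal c ≠ ⊤ := ENNReal.ofReal_ne_top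
    have hset : ∀ t : ℝ, {x : X | ENNReal.ofReal t < ENNReal.ofReal c * f x}
        = {x : X | ENNReal.ofReal (t / c) < f x} := by
      intro t; ext x
      simp only [Set.mem_setOf_eq]
      have ht : ENNReal.ofReal t = ENNReal.ofReal c * ENNReal.ofReal (t / c) := by
        rw [← ENNReal.ofReal_mul hc.le, mul_div_cancel₀ t hc.ne']
      rw [ht, ENNReal.mul_lt_mul_iff_right hc0 hct]
    simp only [choquetIntegralE, hset]
    -- change of variables t = c * s
    have hmap : Measure.map (fun s : ℝ => c * s) volume
        = ENNReal.ofReal c⁻¹ • (volume : Measure ℝ) := by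
      rw [Real.map_volume_mul_left hc.ne', abs_of_pos (inv_pos.2 hc)]
    have h1 : (volume : Measure ℝ).restrict (Set.Ioi 0)
        = ENNReal.ofReal c •
          ((Measure.map (fun s : ℝ => c * s) volume).restrict (Set.Ioi 0)) := by
      rw [hmap, Measure.restrict_smul, smul_smul, ← ENNReal.ofReal_mul hc.le,
        mul_inv_cancel₀ hc.ne', ENNReal.ofReal_one, one_smul]
    have hpre : (fun s : ℝ => c * s) ⁻¹' (Set.Ioi 0) = Set.Ioi 0 := by
      ext s
      simp only [Set.mem_preimage, Set.mem_Ioi]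
      constructor
      · intro h; by_contra hs; push_neg at hs; nlinarith
      · intro h; exact mul_pos hc h
    have key : ∀ (g : ℝ → ℝ≥0∞) (ν : Measure ℝ),
        ∫⁻ t, g t ∂(Measure.map (fun s : ℝ => c * s) ν) = ∫⁻ s, g (c * s) ∂ν := by
      intro g ν
      rw [show (fun s : ℝ => c * s) = ⇑(MeasurableEquiv.mulLeft₀ c hc.ne') from rfl]
      exact lintegral_map_equiv g _
    calc ∫⁻ t in Set.Ioi (0:ℝ), H {x | ENNReal.ofReal (t / c) < f x}
        = ∫⁻ t, H {x | ENNReal.ofReal (t / c) < f x}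
            ∂((volume : Measure ℝ).restrict (Set.Ioi 0)) := rfl
      _ = ENNReal.ofReal c * ∫⁻ t, H {x | ENNReal.ofReal (t / c) < f x}
            ∂((Measure.map (fun s : ℝ => c * s) volume).restrict (Set.Ioi 0)) := by
          rw [h1, lintegral_smul_measure, smul_eq_mul]
      _ = ENNReal.ofReal c * ∫⁻ t, H {x | ENNReal.ofReal (t / c) < f x}
            ∂(Measure.map (fun s : ℝ => c * s) (volume.restrict (Set.Ioi 0))) := by
          rw [Measure.restrict_map (measurable_const_mul c) measurableSet_Ioi, hpre]
      _ = ENNReal.ofReal c * ∫⁻ s, H {x | ENNReal.ofReal ((c * s) / c) < f x}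
            ∂(volume.restrict (Set.Ioi 0)) := by
          rw [key]
      _ = ENNReal.ofReal c * ∫⁻ s in Set.Ioi (0:ℝ), H {x | ENNReal.ofReal s < f x} := by
          congr 1
          refine lintegral_congr fun s => ?_
          rw [mul_div_cancel_left₀ s hc.ne']

lemma choquetE_tendsto
    (hmono : ∀ E F : Set X, E ⊆ F → H E ≤ H F)
    (hbelow : ∀ E : ℕ → Set X, Monotone E →
      Filter.Tendsto (fun n => H (E n)) Filter.atTop (nhds (H (⋃ n, E n))))
    (f : ℕ → X → ℝ≥0∞) (g : X → ℝ≥0∞) (hf : ∀ x, Monotone fun n => f n x)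
    (hg : ∀ x, Filter.Tendsto (fun n => f n x) Filter.atTop (nhds (g x))) :
    Filter.Tendsto (fun n => choquetIntegralE H (f n)) Filter.atTop
      (nhds (choquetIntegralE H g)) := by
  have hgs : ∀ x, g x = ⨆ n, f n x := fun x =>
    tendsto_nhds_unique (hg x) (tendsto_atTop_iSup (hf x))
  simp only [choquetIntegralE]
  apply lintegral_tendsto_of_tendsto_of_monotone
  · intro n
    refine (Antitone.measurable ?_).aemeasurable
    intro s t hst
    exact hmono _ _ fun x hx => lt_of_le_of_lt (ENNReal.ofReal_le_ofReal hst) hx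
  · refine Filter.Eventually.of_forall fun t => ?_
    intro n m hnm
    exact hmono _ _ fun x hx => lt_of_lt_of_le hx (hf x hnm)
  · refine Filter.Eventually.of_forall fun t => ?_
    have hE : Monotone fun n => {x : X | ENNReal.ofReal t < f n x} := by
      intro n m hnm x hx
      exact lt_of_lt_of_le hx (hf x hnm)
    have h2 := hbelow _ hE
    have h3 : (⋃ n, {x : X | ENNReal.ofReal t < f n x}) = {x : X | ENNReal.ofReal t < g x} := by
      ext x
      simp only [Set.mem_iUnion, Set.mem_setOf_eq, hgs x, lt_iSup_iff]
    rwa [h3] at h2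

lemma choquetE_mono (hmono : ∀ E F : Set X, E ⊆ F → H E ≤ H F) {f g : X → ℝ≥0∞}
    (hfg : ∀ x, f x ≤ g x) : choquetIntegralE H f ≤ choquetIntegralE H g :=
  lintegral_mono fun t => hmono _ _ fun x hx => lt_of_lt_of_le hx (hfg x)

lemma choquetE_nat (h0 : H ∅ = 0) (N : X → ℕ) (q : ℕ) (hq : ∀ x, N x ≤ q) :
    choquetIntegralE H (fun x => (N x : ℝ≥0∞)) =
      ∑ k ∈ Finset.range q, H {x | k + 1 ≤ N x} := by
  have hun : Set.Ioi (0:ℝ) = ⋃ k : ℕ, Set.Ioc (k : ℝ) ((k:ℝ)+1) := by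
    ext t
    simp only [Set.mem_Ioi, Set.mem_iUnion, Set.mem_Ioc]
    constructor
    · intro ht
      refine ⟨⌈t⌉₊ - 1, ?_, ?_⟩
      · have h1 : 1 ≤ ⌈t⌉₊ := Nat.one_le_ceil_iff.2 ht
        have hc : ((⌈t⌉₊ - 1 : ℕ) : ℝ) = (⌈t⌉₊ : ℝ) - 1 := by
          push_cast [h1]; ring
        rw [hc]
        have h2 := Nat.ceil_lt_add_one (le_of_lt ht)
        linarith
      · have h1 : 1 ≤ ⌈t⌉₊ := Nat.one_le_ceil_iff.2 ht
        have hc : ((⌈t⌉₊ - 1 : ℕ) : ℝ) = (⌈t⌉₊ : ℝ) - 1 := by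
          push_cast [h1]; ring
        rw [hc]
        have h2 := Nat.le_ceil t
        linarith
    · rintro ⟨k, hk, _⟩
      exact lt_of_le_of_lt (Nat.cast_nonneg k) hk
  have hdisj : Pairwise (Function.onFun Disjoint fun k : ℕ => Set.Ioc (k:ℝ) ((k:ℝ)+1)) := by
    intro i j hij
    rw [Function.onFun, Set.Ioc_disjoint_Ioc]
    have h1 : min i j + 1 ≤ max i j := by omega
    calc min ((i:ℝ)+1) ((j:ℝ)+1) = ((min i j + 1 : ℕ) : ℝ) := by
          push_cast; rw [min_add_add_right]
      _ ≤ ((max i j : ℕ) : ℝ) := by exact_mod_cast h1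
      _ = max (i:ℝ) (j:ℝ) := by push_cast; rfl
  have hval : ∀ k : ℕ, (∫⁻ t in Set.Ioc (k:ℝ) ((k:ℝ)+1),
      H {x | ENNReal.ofReal t < (N x : ℝ≥0∞)}) = H {x | k + 1 ≤ N x} := by
    intro k
    rw [setLIntegral_congr (Filter.EventuallyEq.symm Ioo_ae_eq_Ioc)]
    have hfun : ∀ᵐ t ∂(volume : Measure ℝ), t ∈ Set.Ioo (k:ℝ) ((k:ℝ)+1) →
        H {x | ENNReal.ofReal t < (N x : ℝ≥0∞)} = H {x | k + 1 ≤ N x} := by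
      refine Filter.Eventually.of_forall fun t ht => ?_
      rcases ht with ⟨ht1, ht2⟩
      have hkn : (0:ℝ) ≤ t := le_of_lt (lt_of_le_of_lt (Nat.cast_nonneg k) ht1)
      congr 1
      ext x
      simp only [Set.mem_setOf_eq]
      rw [show ((N x : ℝ≥0∞)) = ENNReal.ofReal (N x : ℝ) by
        rw [ENNReal.ofReal_natCast],
        ENNReal.ofReal_lt_ofReal_iff_of_nonneg hkn]
      constructor
      · intro h
        have : (k:ℝ) < (N x : ℝ) := lt_trans ht1 h
        have : k < N x := by exact_mod_cast this
        omega
      · intro h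
        have : ((k:ℝ)+1) ≤ (N x : ℝ) := by exact_mod_cast h
        linarith
    rw [setLIntegral_congr_fun_ae measurableSet_Ioo hfun, setLIntegral_const,
      Real.volume_Ioo, add_sub_cancel_left, ENNReal.ofReal_one, mul_one]
  calc choquetIntegralE H (fun x => (N x : ℝ≥0∞))
      = ∑' k : ℕ, ∫⁻ t in Set.Ioc (k:ℝ) ((k:ℝ)+1),
          H {x | ENNReal.ofReal t < (N x : ℝ≥0∞)} := by
        rw [choquetIntegralE, hun, lintegral_iUnion (fun k => measurableSet_Ioc) hdisj]
    _ = ∑' k : ℕ, H {x | k + 1 ≤ N x} := by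
        exact tsum_congr hval
    _ = ∑ k ∈ Finset.range q, H {x | k + 1 ≤ N x} := by
        refine tsum_eq_sum fun k hk => ?_
        have hkq : q ≤ k := by
          by_contra h
          exact hk (Finset.mem_range.2 (by omega))
        have he : {x : X | k + 1 ≤ N x} = (∅ : Set X) := by
          ext x
          simp only [Set.mem_setOf_eq, Set.mem_empty_iff_false, iff_false]
          have := hq x; omega
        rw [he, h0]

lemma key_ind (h0 : H ∅ = 0)
    (hstrong : ∀ E F : Set X, H (E ∪ F) + H (E ∩ F) ≤ H E + H F)
    (N N' : X → ℕ) (B : Set X) (q : ℕ) (hq : ∀ x, N x ≤ q)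
    (hmem : ∀ x ∈ B, N' x = N x + 1) (hnot : ∀ x ∉ B, N' x = N x) :
    ∑ k ∈ Finset.range (q+1), H {x | k + 1 ≤ N' x} ≤
      (∑ k ∈ Finset.range q, H {x | k + 1 ≤ N x}) + H B := by
  set A : ℕ → Set X := fun k => {x | k ≤ N x} with hA
  have hD : ∀ k : ℕ, {x | k + 1 ≤ N' x} = A (k+1) ∪ (A k ∩ B) := by
    intro k; ext x
    by_cases hx : x ∈ B
    · simp only [hA, Set.mem_setOf_eq, Set.mem_union, Set.mem_inter_iff, hmem x hx, hx,
        and_true]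
      omega
    · simp only [hA, Set.mem_setOf_eq, Set.mem_union, Set.mem_inter_iff, hnot x hx, hx,
        and_false, or_false]
  have hstep : ∀ k : ℕ, H {x | k + 1 ≤ N' x} + H (A (k+1) ∩ B)
      ≤ H (A (k+1)) + H (A k ∩ B) := by
    intro k
    have h1 := hstrong (A (k+1)) (A k ∩ B)
    have h2 : A (k+1) ∩ (A k ∩ B) = A (k+1) ∩ B := by
      ext x
      simp only [hA, Set.mem_inter_iff, Set.mem_setOf_eq]
      constructor
      · rintro ⟨h, _, hb⟩; exact ⟨h, hb⟩
      · rintro ⟨h, hb⟩; exact ⟨h, by omega, hb⟩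
    rw [h2, ← hD k] at h1
    exact h1
  have main : ∀ j : ℕ, (∑ k ∈ Finset.range j, H {x | k + 1 ≤ N' x}) + H (A j ∩ B)
      ≤ (∑ k ∈ Finset.range j, H (A (k+1))) + H (A 0 ∩ B) := by
    intro j
    induction j with
    | zero => simp
    | succ j ih =>
      rw [Finset.sum_range_succ, Finset.sum_range_succ]
      calc (∑ k ∈ Finset.range j, H {x | k + 1 ≤ N' x}) + H {x | j + 1 ≤ N' x}
            + H (A (j+1) ∩ B)
          = (∑ k ∈ Finset.range j, H {x | k + 1 ≤ N' x})
            + (H {x | j + 1 ≤ N' x} + H (A (j+1) ∩ B)) := by ring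
        _ ≤ (∑ k ∈ Finset.range j, H {x | k + 1 ≤ N' x})
            + (H (A (j+1)) + H (A j ∩ B)) := add_le_add_right (hstep j) _
        _ = ((∑ k ∈ Finset.range j, H {x | k + 1 ≤ N' x}) + H (A j ∩ B)) + H (A (j+1)) := by
            ring
        _ ≤ ((∑ k ∈ Finset.range j, H (A (k+1))) + H (A 0 ∩ B)) + H (A (j+1)) :=
            add_le_add_left ih _
        _ = (∑ k ∈ Finset.range j, H (A (k+1))) + H (A (j+1)) + H (A 0 ∩ B) := by ring
  have h := main (q+1)
  have hA0 : A 0 ∩ B = B := by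
    ext x; simp [hA]
  have hAq : A (q+1) = (∅ : Set X) := by
    ext x
    simp only [hA, Set.mem_setOf_eq, Set.mem_empty_iff_false, iff_false]
    have := hq x; omega
  rw [hA0] at h
  have hAk : ∀ k : ℕ, A (k+1) = {x | k + 1 ≤ N x} := fun k => rfl
  calc ∑ k ∈ Finset.range (q+1), H {x | k + 1 ≤ N' x}
      ≤ (∑ k ∈ Finset.range (q+1), H {x | k + 1 ≤ N' x}) + H (A (q+1) ∩ B) :=
        le_self_add
    _ ≤ (∑ k ∈ Finset.range (q+1), H (A (k+1))) + H B := h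
    _ = (∑ k ∈ Finset.range q, H (A (k+1))) + H (A (q+1)) + H B := by
        rw [Finset.sum_range_succ]
    _ = (∑ k ∈ Finset.range q, H {x | k + 1 ≤ N x}) + H B := by
        rw [hAq, h0, add_zero]

lemma combo (h0 : H ∅ = 0)
    (hstrong : ∀ E F : Set X, H (E ∪ F) + H (E ∩ F) ≤ H E + H F) :
    ∀ (p : ℕ) (P : X → ℕ), (∀ x, P x ≤ p) → ∀ (m : ℕ) (M : X → ℕ), (∀ x, M x ≤ m) →
    ∑ k ∈ Finset.range (m + p), H {x | k + 1 ≤ M x + P x} ≤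
      (∑ k ∈ Finset.range m, H {x | k + 1 ≤ M x}) +
        ∑ k ∈ Finset.range p, H {x | k + 1 ≤ P x} := by
  intro p
  induction p with
  | zero =>
    intro P hP m M hM
    simp only [Nat.add_zero, Finset.range_zero, Finset.sum_empty, add_zero]
    have hs : ∀ k : ℕ, {x : X | k + 1 ≤ M x + P x} = {x : X | k + 1 ≤ M x} := by
      intro k; ext x
      have := hP x
      simp only [Set.mem_setOf_eq]
      omega
    exact le_of_eq (Finset.sum_congr rfl fun k _ => by rw [hs k])
  | succ p ih =>
    intro P hP m M hM
    set B : Set X := {x | p + 1 ≤ P x} with hB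
    set P' : X → ℕ := fun x => P x - (if p + 1 ≤ P x then 1 else 0) with hP'def
    have hP' : ∀ x, P' x ≤ p := by
      intro x
      simp only [hP'def]
      have := hP x
      split <;> omega
    have hmem : ∀ x ∈ B, M x + P x = (M x + P' x) + 1 := by
      intro x hx
      simp only [hB, Set.mem_setOf_eq] at hx
      simp only [hP'def, if_pos hx]
      omega
    have hnot : ∀ x ∉ B, M x + P x = M x + P' x := by
      intro x hx
      simp only [hB, Set.mem_setOf_eq] at hx
      simp only [hP'def, if_neg hx]
      omega
    have hk := key_ind h0 hstrong (fun x => M x + P' x) (fun x => M x + P x) B (m + p)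
      (fun x => add_le_add (hM x) (hP' x)) hmem hnot
    have hih := ih P' hP' m M hM
    have hlev : ∀ k ∈ Finset.range p, H {x | k + 1 ≤ P' x} = H {x | k + 1 ≤ P x} := by
      intro k hkmem
      have hkp : k < p := Finset.mem_range.1 hkmem
      congr 1
      ext x
      simp only [Set.mem_setOf_eq, hP'def]
      have := hP x
      split <;> omega
    calc ∑ k ∈ Finset.range (m + (p+1)), H {x | k + 1 ≤ M x + P x}
        = ∑ k ∈ Finset.range (m + p + 1), H {x | k + 1 ≤ M x + P x} := by
          rw [Nat.add_succ]
      _ ≤ (∑ k ∈ Finset.range (m + p), H {x | k + 1 ≤ M x + P' x}) + H B := hk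
      _ ≤ ((∑ k ∈ Finset.range m, H {x | k + 1 ≤ M x}) +
            ∑ k ∈ Finset.range p, H {x | k + 1 ≤ P' x}) + H B :=
          add_le_add_left hih _
      _ = (∑ k ∈ Finset.range m, H {x | k + 1 ≤ M x}) +
            ((∑ k ∈ Finset.range p, H {x | k + 1 ≤ P x}) + H {x | p + 1 ≤ P x}) := by
          rw [Finset.sum_congr rfl hlev, add_assoc]
      _ = (∑ k ∈ Finset.range m, H {x | k + 1 ≤ M x}) +
            ∑ k ∈ Finset.range (p+1), H {x | k + 1 ≤ P x} := by
          rw [Finset.sum_range_succ]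

lemma binary_discrete (h0 : H ∅ = 0)
    (hstrong : ∀ E F : Set X, H (E ∪ F) + H (E ∩ F) ≤ H E + H F)
    (M P : X → ℕ) (m p : ℕ) (hM : ∀ x, M x ≤ m) (hP : ∀ x, P x ≤ p) :
    choquetIntegralE H (fun x => ((M x + P x : ℕ) : ℝ≥0∞)) ≤
      choquetIntegralE H (fun x => (M x : ℝ≥0∞)) +
        choquetIntegralE H (fun x => (P x : ℝ≥0∞)) := by
  rw [choquetE_nat h0 (fun x => M x + P x) (m + p) (fun x => add_le_add (hM x) (hP x)),
    choquetE_nat h0 M m hM, choquetE_nat h0 P p hP]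
  exact combo h0 hstrong p P hP m M hM

end ChoquetAux

section ChoquetApprox

open MeasureTheory

variable {X : Type*}

/-- Dyadic discretization level function. -/
noncomputable def approxN (f : X → ℝ≥0∞) (n : ℕ) (x : X) : ℕ :=
  ⌊(min ((2:ℝ≥0∞)^n * f x) ((4:ℝ≥0∞)^n)).toReal⌋₊

/-- Dyadic approximation of `f` from below. -/
noncomputable def approxE (f : X → ℝ≥0∞) (n : ℕ) (x : X) : ℝ≥0∞ :=
  ENNReal.ofReal (((2:ℝ)^n)⁻¹) * (approxN f n x : ℝ≥0∞)

lemma approxN_le (f : X → ℝ≥0∞) (n : ℕ) (x : X) : approxN f n x ≤ 4^n := by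
  have h4 : ((4:ℝ≥0∞)^n) ≠ ⊤ := (ENNReal.pow_ne_top (by norm_num))
  have h1 : (min ((2:ℝ≥0∞)^n * f x) ((4:ℝ≥0∞)^n)).toReal ≤ ((4:ℝ≥0∞)^n).toReal :=
    ENNReal.toReal_mono h4 (min_le_right _ _)
  have h2 : ((4:ℝ≥0∞)^n).toReal = ((4^n : ℕ) : ℝ) := by
    rw [ENNReal.toReal_pow]
    push_cast
    norm_num
  calc approxN f n x ≤ ⌊((4^n : ℕ) : ℝ)⌋₊ := Nat.floor_le_floor (h2 ▸ h1)
    _ = 4^n := Nat.floor_natCast _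

lemma approxE_eq (f : X → ℝ≥0∞) (n : ℕ) (x : X) :
    approxE f n x = ENNReal.ofReal (((2:ℝ)^n)⁻¹ * (approxN f n x : ℝ)) := by
  rw [approxE, ENNReal.ofReal_mul (by positivity), ENNReal.ofReal_natCast]

lemma min_ne_top (f : X → ℝ≥0∞) (n : ℕ) (x : X) :
    min ((2:ℝ≥0∞)^n * f x) ((4:ℝ≥0∞)^n) ≠ ⊤ := by
  have h4 : ((4:ℝ≥0∞))^n ≠ ⊤ := ENNReal.pow_ne_top (by norm_num)
  exact ne_top_of_le_ne_top h4 (min_le_right _ _)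

lemma approxE_mono (f : X → ℝ≥0∞) (x : X) : Monotone fun n => approxE f n x := by
  apply monotone_nat_of_le_succ
  intro n
  set t : ℕ → ℝ≥0∞ := fun m => min ((2:ℝ≥0∞)^m * f x) ((4:ℝ≥0∞)^m) with ht
  have htne : ∀ m, t m ≠ ⊤ := fun m => min_ne_top f m x
  have h2t : 2 * t n ≤ t (n+1) := by
    apply le_min
    · calc 2 * t n ≤ 2 * ((2:ℝ≥0∞)^n * f x) := mul_le_mul_right (min_le_left _ _) 2
        _ = (2:ℝ≥0∞)^(n+1) * f x := by rw [pow_succ]; ring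
    · calc 2 * t n ≤ 2 * (4:ℝ≥0∞)^n := mul_le_mul_right (min_le_right _ _) 2
        _ ≤ 4 * (4:ℝ≥0∞)^n := by
            gcongr
            norm_num
        _ = (4:ℝ≥0∞)^(n+1) := by rw [pow_succ]; ring
  have hreal : 2 * (t n).toReal ≤ (t (n+1)).toReal := by
    have := ENNReal.toReal_mono (htne (n+1)) h2t
    rwa [ENNReal.toReal_mul, ENNReal.toReal_ofNat] at this
  have hMn : 2 * approxN f n x ≤ approxN f (n+1) x := by
    have hfl : ((2 * approxN f n x : ℕ) : ℝ) ≤ (t (n+1)).toReal := by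
      have h1 : (approxN f n x : ℝ) ≤ (t n).toReal := Nat.floor_le ENNReal.toReal_nonneg
      push_cast
      nlinarith
    exact Nat.le_floor hfl
  rw [approxE_eq, approxE_eq]
  apply ENNReal.ofReal_le_ofReal
  have hcast : (2:ℝ) * (approxN f n x : ℝ) ≤ (approxN f (n+1) x : ℝ) := by
    exact_mod_cast hMn
  have h2pos : (0:ℝ) < 2^(n+1) := by positivity
  calc ((2:ℝ)^n)⁻¹ * (approxN f n x : ℝ)
      = ((2:ℝ)^(n+1))⁻¹ * (2 * (approxN f n x : ℝ)) := by
        rw [pow_succ]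
        field_simp
    _ ≤ ((2:ℝ)^(n+1))⁻¹ * (approxN f (n+1) x : ℝ) := by
        apply mul_le_mul_of_nonneg_left hcast (by positivity)

lemma ofReal_inv_two_pow (n : ℕ) :
    ENNReal.ofReal (((2:ℝ)^n)⁻¹) = ((2:ℝ≥0∞)^n)⁻¹ := by
  rw [ENNReal.ofReal_inv_of_pos (by positivity), ENNReal.ofReal_pow (by norm_num),
    ENNReal.ofReal_ofNat]

lemma approxE_le (f : X → ℝ≥0∞) (n : ℕ) (x : X) : approxE f n x ≤ f x := by
  have htne := min_ne_top f n x
  have h1 : (approxN f n x : ℝ≥0∞) ≤ min ((2:ℝ≥0∞)^n * f x) ((4:ℝ≥0∞)^n) := by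
    calc (approxN f n x : ℝ≥0∞)
        = ENNReal.ofReal (approxN f n x : ℝ) := (ENNReal.ofReal_natCast _).symm
      _ ≤ ENNReal.ofReal ((min ((2:ℝ≥0∞)^n * f x) ((4:ℝ≥0∞)^n)).toReal) :=
          ENNReal.ofReal_le_ofReal (Nat.floor_le ENNReal.toReal_nonneg)
      _ = min ((2:ℝ≥0∞)^n * f x) ((4:ℝ≥0∞)^n) := ENNReal.ofReal_toReal htne
  calc approxE f n x ≤ ENNReal.ofReal (((2:ℝ)^n)⁻¹) * ((2:ℝ≥0∞)^n * f x) :=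
        mul_le_mul_right (h1.trans (min_le_left _ _)) _
    _ = f x := by
        rw [ofReal_inv_two_pow, ← mul_assoc,
          ENNReal.inv_mul_cancel (by positivity) (ENNReal.pow_ne_top (by norm_num)), one_mul]

lemma approxE_tendsto (f : X → ℝ≥0∞) (x : X) :
    Filter.Tendsto (fun n => approxE f n x) Filter.atTop (nhds (f x)) := by
  have hmono := approxE_mono f x
  have hsup : (⨆ n, approxE f n x) = f x := by
    apply le_antisymm (iSup_le fun n => approxE_le f n x)
    by_cases hfx : f x = ⊤
    · -- approxE f n x = 2^n in this case
      have happ : ∀ n, approxE f n x = (2:ℝ≥0∞)^n := by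
        intro n
        have ht : min ((2:ℝ≥0∞)^n * f x) ((4:ℝ≥0∞)^n) = (4:ℝ≥0∞)^n := by
          rw [hfx, ENNReal.mul_top (by positivity), min_eq_right le_top]
        have htr : ((4:ℝ≥0∞)^n).toReal = ((4^n : ℕ) : ℝ) := by
          rw [ENNReal.toReal_pow]; push_cast; norm_num
        have hN : approxN f n x = 4^n := by
          rw [approxN, ht, htr, Nat.floor_natCast]
        rw [approxE, hN, ofReal_inv_two_pow]
        have h4 : ((4:ℝ≥0∞))^n = (2:ℝ≥0∞)^n * (2:ℝ≥0∞)^n := by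
          rw [← mul_pow]; norm_num
        push_cast
        rw [h4, ← mul_assoc,
          ENNReal.inv_mul_cancel (by positivity) (ENNReal.pow_ne_top (by norm_num)), one_mul]
      rw [hfx]
      have : (⊤ : ℝ≥0∞) = ⨆ n, (2:ℝ≥0∞)^n := by
        symm
        apply ENNReal.eq_top_of_forall_nnreal_le
        intro r
        obtain ⟨n, hn⟩ := pow_unbounded_of_one_lt r (one_lt_two : (1:ℝ≥0) < 2)
        calc (r : ℝ≥0∞) ≤ ((2^n : ℝ≥0) : ℝ≥0∞) := by exact_mod_cast hn.le
          _ = (2:ℝ≥0∞)^n := by push_cast; ring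
          _ ≤ ⨆ n, (2:ℝ≥0∞)^n := le_iSup _ n
      rw [this]
      exact iSup_mono fun n => le_of_eq (happ n).symm
    · apply ENNReal.le_of_forall_pos_le_add
      intro ε hε _
      set a : ℝ := (f x).toReal with ha
      have ha0 : 0 ≤ a := ENNReal.toReal_nonneg
      obtain ⟨n, hn⟩ := pow_unbounded_of_one_lt (max a (ε:ℝ)⁻¹) (one_lt_two : (1:ℝ) < 2)
      have han : a < 2^n := lt_of_le_of_lt (le_max_left _ _) hn
      have hεn : (ε:ℝ)⁻¹ < 2^n := lt_of_le_of_lt (le_max_right _ _) hn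
      have hfle : f x ≤ (2:ℝ≥0∞)^n := by
        calc f x = ENNReal.ofReal a := (ENNReal.ofReal_toReal hfx).symm
          _ ≤ ENNReal.ofReal ((2:ℝ)^n) := ENNReal.ofReal_le_ofReal han.le
          _ = (2:ℝ≥0∞)^n := by
              rw [ENNReal.ofReal_pow (by norm_num), ENNReal.ofReal_ofNat]
      have ht : min ((2:ℝ≥0∞)^n * f x) ((4:ℝ≥0∞)^n) = (2:ℝ≥0∞)^n * f x := by
        apply min_eq_left
        calc (2:ℝ≥0∞)^n * f x ≤ (2:ℝ≥0∞)^n * (2:ℝ≥0∞)^n := mul_le_mul_right hfle _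
          _ = (4:ℝ≥0∞)^n := by rw [← mul_pow]; norm_num
      have htr : (min ((2:ℝ≥0∞)^n * f x) ((4:ℝ≥0∞)^n)).toReal = 2^n * a := by
        rw [ht, ENNReal.toReal_mul, ENNReal.toReal_pow, ENNReal.toReal_ofNat]
      have hfloor : (2:ℝ)^n * a - 1 ≤ (approxN f n x : ℝ) := by
        rw [approxN, htr]
        exact (Nat.sub_one_lt_floor _).le
      have hstep : ENNReal.ofReal (a - ((2:ℝ)^n)⁻¹) ≤ approxE f n x := by
        rw [approxE_eq]
        apply ENNReal.ofReal_le_ofReal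
        have h1 : a - ((2:ℝ)^n)⁻¹ ≤ ((2:ℝ)^n)⁻¹ * ((2:ℝ)^n * a - 1) := by
          rw [mul_sub, mul_one, ← mul_assoc, inv_mul_cancel₀ (by positivity), one_mul]
        exact h1.trans (mul_le_mul_of_nonneg_left hfloor (by positivity))
      have hδε : ENNReal.ofReal (((2:ℝ)^n)⁻¹) ≤ (ε : ℝ≥0∞) := by
        rw [show ((ε:ℝ≥0∞)) = ENNReal.ofReal (ε:ℝ) from ENNReal.ofReal_coe_nnreal.symm]
        apply ENNReal.ofReal_le_ofReal
        have hεpos : (0:ℝ) < (ε:ℝ) := hε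
        rw [inv_le_comm₀ (by positivity) hεpos]
        exact hεn.le
      calc f x = ENNReal.ofReal a := (ENNReal.ofReal_toReal hfx).symm
        _ = ENNReal.ofReal ((a - ((2:ℝ)^n)⁻¹) + ((2:ℝ)^n)⁻¹) := by ring_nf
        _ ≤ ENNReal.ofReal (a - ((2:ℝ)^n)⁻¹) + ENNReal.ofReal (((2:ℝ)^n)⁻¹) :=
            ENNReal.ofReal_add_le
        _ ≤ approxE f n x + (ε : ℝ≥0∞) := add_le_add hstep hδε
        _ ≤ (⨆ n, approxE f n x) + (ε : ℝ≥0∞) := add_le_add_left (le_iSup (fun n => approxE f n x) n) _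
  have := tendsto_atTop_iSup hmono
  rwa [hsup] at this

end ChoquetApprox

section ChoquetBinary

open MeasureTheory

variable {X : Type*} {H : Set X → ℝ≥0∞}

lemma choquetE_binary (h0 : H ∅ = 0)
    (hmono : ∀ E F : Set X, E ⊆ F → H E ≤ H F)
    (hstrong : ∀ E F : Set X, H (E ∪ F) + H (E ∩ F) ≤ H E + H F)
    (hbelow : ∀ E : ℕ → Set X, Monotone E →
      Filter.Tendsto (fun n => H (E n)) Filter.atTop (nhds (H (⋃ n, E n))))
    (f g : X → ℝ≥0∞) :
    choquetIntegralE H (fun x => f x + g x) ≤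
      choquetIntegralE H f + choquetIntegralE H g := by
  have h1 : Filter.Tendsto (fun n => choquetIntegralE H (approxE f n)) Filter.atTop
      (nhds (choquetIntegralE H f)) :=
    choquetE_tendsto hmono hbelow _ f (approxE_mono f) (approxE_tendsto f)
  have h2 : Filter.Tendsto (fun n => choquetIntegralE H (approxE g n)) Filter.atTop
      (nhds (choquetIntegralE H g)) :=
    choquetE_tendsto hmono hbelow _ g (approxE_mono g) (approxE_tendsto g)
  have h3 : Filter.Tendsto
      (fun n => choquetIntegralE H (fun x => approxE f n x + approxE g n x)) Filter.atTop
      (nhds (choquetIntegralE H (fun x => f x + g x))) := by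
    apply choquetE_tendsto hmono hbelow
    · intro x n m hnm
      exact add_le_add (approxE_mono f x hnm) (approxE_mono g x hnm)
    · intro x
      exact (approxE_tendsto f x).add (approxE_tendsto g x)
  have h4 : ∀ n, choquetIntegralE H (fun x => approxE f n x + approxE g n x) ≤
      choquetIntegralE H (approxE f n) + choquetIntegralE H (approxE g n) := by
    intro n
    have e1 : (fun x => approxE f n x + approxE g n x)
        = fun x => ENNReal.ofReal (((2:ℝ)^n)⁻¹) *
            (((approxN f n x + approxN g n x : ℕ)) : ℝ≥0∞) := by
      funext x
      rw [approxE, approxE, ← mul_add]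
      push_cast
      ring
    have e2 : choquetIntegralE H (approxE f n)
        = ENNReal.ofReal (((2:ℝ)^n)⁻¹) *
            choquetIntegralE H (fun x => (approxN f n x : ℝ≥0∞)) := by
      rw [show approxE f n = fun x => ENNReal.ofReal (((2:ℝ)^n)⁻¹) *
        (approxN f n x : ℝ≥0∞) from rfl]
      exact choquetE_smul h0 _ (by positivity) _
    have e3 : choquetIntegralE H (approxE g n)
        = ENNReal.ofReal (((2:ℝ)^n)⁻¹) *
            choquetIntegralE H (fun x => (approxN g n x : ℝ≥0∞)) := by
      rw [show approxE g n = fun x => ENNReal.ofReal (((2:ℝ)^n)⁻¹) *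
        (approxN g n x : ℝ≥0∞) from rfl]
      exact choquetE_smul h0 _ (by positivity) _
    rw [e1, choquetE_smul h0 _ (by positivity), e2, e3, ← mul_add]
    exact mul_le_mul_right
      (binary_discrete h0 hstrong (approxN f n) (approxN g n) (4^n) (4^n)
        (approxN_le f n) (approxN_le g n)) _
  exact le_of_tendsto_of_tendsto' h3 (h1.add h2) h4

end ChoquetBinary

theorem choquet_integral_properties (d : ℕ) (hd : 1 ≤ d) (H : Set (Euc d) → ℝ≥0∞)
    (h0 : H ∅ = 0) (hmono : ∀ E F : Set (Euc d), E ⊆ F → H E ≤ H F)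
    (hsub : ∀ E : ℕ → Set (Euc d), H (⋃ n, E n) ≤ ∑' n, H (E n))
    (hstrong : ∀ E F : Set (Euc d), H (E ∪ F) + H (E ∩ F) ≤ H E + H F)
    (hbelow : ∀ E : ℕ → Set (Euc d), Monotone E →
      Filter.Tendsto (fun n => H (E n)) Filter.atTop (nhds (H (⋃ n, E n)))) :
    (∀ c : ℝ, 0 ≤ c → ∀ f : Euc d → ℝ≥0∞,
        choquetIntegralE H (fun x => ENNReal.ofReal c * f x) =
          ENNReal.ofReal c * choquetIntegralE H f) ∧
    (∀ (f : ℕ → Euc d → ℝ≥0∞) (g : Euc d → ℝ≥0∞),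
        (∀ x, Monotone fun n => f n x) →
        (∀ x, Filter.Tendsto (fun n => f n x) Filter.atTop (nhds (g x))) →
        Filter.Tendsto (fun n => choquetIntegralE H (f n)) Filter.atTop
          (nhds (choquetIntegralE H g))) ∧
    (∀ f : ℕ → Euc d → ℝ≥0∞,
        choquetIntegralE H (fun x => ∑' n, f n x) ≤ ∑' n, choquetIntegralE H (f n)) := by
  refine ⟨fun c hc f => choquetE_smul h0 c hc f,
    fun f g hf hg => choquetE_tendsto hmono hbelow f g hf hg, fun f => ?_⟩
  -- countable sublinearity
  have hpart : ∀ N : ℕ, choquetIntegralE H (fun x => ∑ n ∈ Finset.range N, f n x) ≤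
      ∑ n ∈ Finset.range N, choquetIntegralE H (f n) := by
    intro N
    induction N with
    | zero =>
      simp only [Finset.range_zero, Finset.sum_empty]
      exact le_of_eq (choquetE_zero h0)
    | succ N ih =>
      have hb := choquetE_binary h0 hmono hstrong hbelow
        (fun x => ∑ n ∈ Finset.range N, f n x) (f N)
      rw [Finset.sum_range_succ]
      calc choquetIntegralE H (fun x => ∑ n ∈ Finset.range (N+1), f n x)
          = choquetIntegralE H (fun x => (∑ n ∈ Finset.range N, f n x) + f N x) := by
            congr 1
            funext x
            rw [Finset.sum_range_succ]
        _ ≤ choquetIntegralE H (fun x => ∑ n ∈ Finset.range N, f n x) +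
              choquetIntegralE H (f N) := hb
        _ ≤ (∑ n ∈ Finset.range N, choquetIntegralE H (f n)) +
              choquetIntegralE H (f N) := add_le_add_left ih _
  have hmct : Filter.Tendsto
      (fun N => choquetIntegralE H (fun x => ∑ n ∈ Finset.range N, f n x)) Filter.atTop
      (nhds (choquetIntegralE H (fun x => ∑' n, f n x))) := by
    apply choquetE_tendsto hmono hbelow
    · intro x N M hNM
      exact Finset.sum_le_sum_of_subset (Finset.range_subset_range.2 hNM)
    · intro x
      exact ENNReal.tendsto_nat_tsum _
  exact le_of_tendsto' hmct fun N => (hpart N).trans (ENNReal.sum_le_tsum _)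

end
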